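/- If f has L-Lipschitz gradient, η ≤ 1/(4L), y = x + (1-θ)(x - x_prev) for θ ∈ [0,1], and x⁺ = y - η∇f(y), then f(x⁺) - f(x) ≤ (5/(8η))‖x - x_prev‖² - (1/(2η))‖x⁺ - x‖² - (3η/8)‖∇f(y)‖². -/

import Mathlib

open RealInnerProductSpace

lemma line_hasDerivAt {d : ℕ} (f : EuclideanSpace ℝ (Fin d) → ℝ)
    (f' : EuclideanSpace ℝ (Fin d) → EuclideanSpace ℝ (Fin d))
    (hgrad : ∀ x, HasGradientAt f (f' x) x)
    (a v : EuclideanSpace ℝ (Fin d)) (t : ℝ) :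
    HasDerivAt (fun s : ℝ => f (a + s • v)) ⟪f' (a + t • v), v⟫ t := by
  have h1 : HasDerivAt (fun s : ℝ => a + s • v) v t := by
    simpa using ((hasDerivAt_id t).smul_const v).const_add a
  have h2 := (hgrad (a + t • v)).hasFDerivAt
  have := h2.comp_hasDerivAt t h1
  simp [InnerProductSpace.toDual_apply_apply] at this
  exact this

lemma descent_upper {d : ℕ} (f : EuclideanSpace ℝ (Fin d) → ℝ)
    (f' : EuclideanSpace ℝ (Fin d) → EuclideanSpace ℝ (Fin d)) (L : ℝ) (hL : 0 < L)
    (hgrad : ∀ x, HasGradientAt f (f' x) x)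
    (hlip : ∀ x y, ‖f' x - f' y‖ ≤ L * ‖x - y‖)
    (a b : EuclideanSpace ℝ (Fin d)) :
    f b ≤ f a + ⟪f' a, b - a⟫ + L / 2 * ‖b - a‖ ^ 2 := by
  set v := b - a with hv
  set u : ℝ → ℝ := fun t => L / 2 * ‖v‖ ^ 2 * t ^ 2 + ⟪f' a, v⟫ * t - f (a + t • v) with hu
  have hud : ∀ t : ℝ, HasDerivAt u
      (L / 2 * ‖v‖ ^ 2 * (2 * t) + ⟪f' a, v⟫ - ⟪f' (a + t • v), v⟫) t := by
    intro t
    have hp : HasDerivAt (fun s : ℝ => L / 2 * ‖v‖ ^ 2 * s ^ 2) (L / 2 * ‖v‖ ^ 2 * (2 * t)) t := by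
      simpa [mul_comm] using (hasDerivAt_pow 2 t).const_mul (L / 2 * ‖v‖ ^ 2)
    have hl : HasDerivAt (fun s : ℝ => ⟪f' a, v⟫ * s) ⟪f' a, v⟫ t := by
      simpa using (hasDerivAt_id t).const_mul ⟪f' a, v⟫
    exact (hp.add hl).sub (line_hasDerivAt f f' hgrad a v t)
  have hmono : MonotoneOn u (Set.Icc (0:ℝ) 1) := by
    apply monotoneOn_of_deriv_nonneg (convex_Icc 0 1)
    · exact fun t _ => ((hud t).continuousAt).continuousWithinAt
    · intro t _; exact ((hud t).differentiableAt).differentiableWithinAt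
    · intro t ht
      rw [interior_Icc] at ht
      rw [(hud t).deriv]
      have hb : ⟪f' (a + t • v) - f' a, v⟫ ≤ L * t * ‖v‖ ^ 2 := by
        calc ⟪f' (a + t • v) - f' a, v⟫ ≤ ‖f' (a + t • v) - f' a‖ * ‖v‖ :=
              real_inner_le_norm _ _
          _ ≤ (L * ‖(a + t • v) - a‖) * ‖v‖ := by
              have := hlip (a + t • v) a
              nlinarith [norm_nonneg v]
          _ = L * t * ‖v‖ ^ 2 := by
              rw [add_sub_cancel_left, norm_smul]
              simp [abs_of_nonneg ht.1.le]
              ring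
      have : ⟪f' (a + t • v), v⟫ - ⟪f' a, v⟫ ≤ L * t * ‖v‖ ^ 2 := by
        rw [← inner_sub_left]; exact hb
      nlinarith
  have h01 := hmono (Set.mem_Icc.2 ⟨le_refl 0, zero_le_one⟩)
      (Set.mem_Icc.2 ⟨zero_le_one, le_refl 1⟩) zero_le_one
  simp only [hu] at h01
  have e0 : a + (0:ℝ) • v = a := by simp
  have e1 : a + (1:ℝ) • v = b := by simp [hv]
  rw [e0, e1] at h01
  nlinarith [h01]

lemma descent_lower {d : ℕ} (f : EuclideanSpace ℝ (Fin d) → ℝ)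
    (f' : EuclideanSpace ℝ (Fin d) → EuclideanSpace ℝ (Fin d)) (L : ℝ) (hL : 0 < L)
    (hgrad : ∀ x, HasGradientAt f (f' x) x)
    (hlip : ∀ x y, ‖f' x - f' y‖ ≤ L * ‖x - y‖)
    (a b : EuclideanSpace ℝ (Fin d)) :
    f a + ⟪f' a, b - a⟫ - L / 2 * ‖b - a‖ ^ 2 ≤ f b := by
  set v := b - a with hv
  set u : ℝ → ℝ := fun t => L / 2 * ‖v‖ ^ 2 * t ^ 2 - ⟪f' a, v⟫ * t + f (a + t • v) with hu
  have hud : ∀ t : ℝ, HasDerivAt u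
      (L / 2 * ‖v‖ ^ 2 * (2 * t) - ⟪f' a, v⟫ + ⟪f' (a + t • v), v⟫) t := by
    intro t
    have hp : HasDerivAt (fun s : ℝ => L / 2 * ‖v‖ ^ 2 * s ^ 2) (L / 2 * ‖v‖ ^ 2 * (2 * t)) t := by
      simpa [mul_comm] using (hasDerivAt_pow 2 t).const_mul (L / 2 * ‖v‖ ^ 2)
    have hl : HasDerivAt (fun s : ℝ => ⟪f' a, v⟫ * s) ⟪f' a, v⟫ t := by
      simpa using (hasDerivAt_id t).const_mul ⟪f' a, v⟫
    exact (hp.sub hl).add (line_hasDerivAt f f' hgrad a v t)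
  have hmono : MonotoneOn u (Set.Icc (0:ℝ) 1) := by
    apply monotoneOn_of_deriv_nonneg (convex_Icc 0 1)
    · exact fun t _ => ((hud t).continuousAt).continuousWithinAt
    · intro t _; exact ((hud t).differentiableAt).differentiableWithinAt
    · intro t ht
      rw [interior_Icc] at ht
      rw [(hud t).deriv]
      have hb : ⟪f' a - f' (a + t • v), v⟫ ≤ L * t * ‖v‖ ^ 2 := by
        calc ⟪f' a - f' (a + t • v), v⟫ ≤ ‖f' a - f' (a + t • v)‖ * ‖v‖ :=
              real_inner_le_norm _ _
          _ ≤ (L * ‖a - (a + t • v)‖) * ‖v‖ := by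
              have := hlip a (a + t • v)
              nlinarith [norm_nonneg v]
          _ = L * t * ‖v‖ ^ 2 := by
              have : a - (a + t • v) = -(t • v) := by abel
              rw [this, norm_neg, norm_smul]
              simp [abs_of_nonneg ht.1.le]
              ring
      have : ⟪f' a, v⟫ - ⟪f' (a + t • v), v⟫ ≤ L * t * ‖v‖ ^ 2 := by
        rw [← inner_sub_left]; exact hb
      nlinarith
  have h01 := hmono (Set.mem_Icc.2 ⟨le_refl 0, zero_le_one⟩)
      (Set.mem_Icc.2 ⟨zero_le_one, le_refl 1⟩) zero_le_one
  simp only [hu] at h01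
  have e0 : a + (0:ℝ) • v = a := by simp
  have e1 : a + (1:ℝ) • v = b := by simp [hv]
  rw [e0, e1] at h01
  nlinarith [h01]

set_option maxHeartbeats 1000000

/-- One AGD step descent inequality: with y = x + (1-θ)(x - x_prev) and
x⁺ = y - η∇f(y), we have
f(x⁺) - f(x) ≤ (5/(8η))‖x - x_prev‖² - (1/(2η))‖x⁺ - x‖² - (3η/8)‖∇f(y)‖². -/
theorem stmt_1 {d : ℕ} (f : EuclideanSpace ℝ (Fin d) → ℝ)
    (f' : EuclideanSpace ℝ (Fin d) → EuclideanSpace ℝ (Fin d))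
    (L η θ : ℝ) (hL : 0 < L)
    (hgrad : ∀ x, HasGradientAt f (f' x) x)
    (hlip : ∀ x y, ‖f' x - f' y‖ ≤ L * ‖x - y‖)
    (hη0 : 0 < η) (hη : η ≤ 1 / (4 * L))
    (hθ0 : 0 ≤ θ) (hθ1 : θ ≤ 1)
    (x xprev y xp : EuclideanSpace ℝ (Fin d))
    (hy : y = x + (1 - θ) • (x - xprev))
    (hxp : xp = y - η • f' y) :
    f xp - f x ≤ (5 / (8 * η)) * ‖x - xprev‖ ^ 2
      - (1 / (2 * η)) * ‖xp - x‖ ^ 2 - (3 * η / 8) * ‖f' y‖ ^ 2 := by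
  have h1 := descent_upper f f' L hL hgrad hlip y xp
  have h2 := descent_lower f f' L hL hgrad hlip y x
  set g := f' y with hg
  set A := ‖x - xprev‖ ^ 2 with hA
  set G := ‖g‖ ^ 2 with hG
  set U := ‖y - x‖ ^ 2 with hU
  set I := ⟪g, y - x⟫ with hI
  -- basic vector identities
  have hyx : y - x = (1 - θ) • (x - xprev) := by rw [hy]; abel
  have hxpy : xp - y = -(η • g) := by rw [hxp]; abel
  have hxpx : xp - x = (y - x) - η • g := by rw [hxp]; abel
  have hUA : U ≤ A := by
    rw [hU, hyx, norm_smul, Real.norm_eq_abs, mul_pow, sq_abs, hA]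
    nlinarith [sq_nonneg ‖x - xprev‖, mul_nonneg (mul_nonneg hθ0 (by linarith : (0:ℝ) ≤ 2 - θ)) (sq_nonneg ‖x - xprev‖)]
  have hA0 : 0 ≤ A := sq_nonneg _
  have hG0 : 0 ≤ G := sq_nonneg _
  have hU0 : 0 ≤ U := sq_nonneg _
  -- ‖xp - y‖² = η² G
  have hnxpy : ‖xp - y‖ ^ 2 = η ^ 2 * G := by
    rw [hxpy, norm_neg, norm_smul, hG]
    rw [Real.norm_eq_abs, mul_pow, sq_abs]
  -- ⟪g, xp - y⟫
  have hinner1 : ⟪g, xp - y⟫ = -(η * G) := by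
    rw [hxpy, inner_neg_right, real_inner_smul_right, real_inner_self_eq_norm_sq, hG]
  have hinner2 : ⟪g, xp - x⟫ = I - η * G := by
    rw [hxpx, inner_sub_right, real_inner_smul_right, real_inner_self_eq_norm_sq, ← hI, ← hG]
  -- ‖xp - x‖²
  have hV : ‖xp - x‖ ^ 2 = U - 2 * η * I + η ^ 2 * G := by
    rw [hxpx, norm_sub_sq_real, real_inner_smul_right, norm_smul, Real.norm_eq_abs,
      mul_pow, sq_abs, ← hU, real_inner_comm g (y - x), ← hI, ← hG]
    ring
  have hinner3 : ⟪g, x - y⟫ = -I := by rw [hI, ← inner_neg_right, neg_sub]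
  have hUrev : ‖x - y‖ ^ 2 = U := by rw [hU, norm_sub_rev]
  rw [hnxpy, hinner1] at h1
  rw [hinner3, hUrev] at h2
  have hmain : f xp - f x ≤ I - η * G + L / 2 * (η ^ 2 * G) + L / 2 * U := by
    linarith
  have hLη : L * η ≤ 1 / 4 := by
    have h4 : 0 < 4 * L := by linarith
    have := (le_div_iff₀ h4).mp hη
    linarith
  have hL4 : L ≤ 1 / (4 * η) := by
    rw [le_div_iff₀ (by positivity)]
    linarith
  have hVexp : (1 / (2 * η)) * ‖xp - x‖ ^ 2 = (1 / (2 * η)) * U - I + (η / 2) * G := by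
    rw [hV]; field_simp
  rw [hVexp]
  have hq1 : L / 2 * (η ^ 2 * G) ≤ η / 8 * G := by
    nlinarith [mul_nonneg (sub_nonneg.2 hLη) (mul_nonneg hη0.le hG0)]
  have hq2 : L / 2 * U ≤ 5 / (8 * η) * A - 1 / (2 * η) * U := by
    have hc : (0:ℝ) < 1 / (8 * η) := by positivity
    have e : 5 / (8 * η) * A - 1 / (2 * η) * U = 1 / (8 * η) * (5 * A - 4 * U) := by
      field_simp; ring
    have e2 : 1 / (8 * η) * (5 * A - 4 * U) = (5 * A - 4 * U) / (8 * η) := by ring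
    rw [e, e2, le_div_iff₀ (by positivity : (0:ℝ) < 8 * η)]
    nlinarith [mul_nonneg (sub_nonneg.2 hLη) hU0]
  linarith
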